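/- arXiv:2111.10409 — 2 statements merged into one kernel-verified Lean document; each statement's English description precedes it below -/
import Mathlib

section
/- Let f : {0,1}^N → {0,1,⊥}, and let ρ, σ be independent random restrictions with Pr[*] = p and q respectively. Suppose there are classes of partial functions C and D such that (a) E_ρ[disagr_{f_ρ}(C)] ≤ ε, and (b) for every g ∈ C, E_σ[disagr_{g_σ}(D)] ≤ δ. Then E_{ρσ}[disagr_{f_{ρσ}}(D)] ≤ ε + δ. -/
open Finset

/-- Disagreement of `g` with the partial function `f`. -/
noncomputable def disagr (N : ℕ) (f g : (Fin N → Bool) → Option Bool) : ℝ :=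
  ((Finset.univ.filter fun x : Fin N → Bool => (f x).isSome ∧ g x ≠ f x).card : ℝ) / 2 ^ N

/-- Disagreement of a class `C` with `f`: the infimum (= minimum, as only finitely
many values occur) of the disagreements of members of `C` with `f`. -/
noncomputable def disagrClass (N : ℕ) (f : (Fin N → Bool) → Option Bool)
    (C : Set ((Fin N → Bool) → Option Bool)) : ℝ :=
  sInf (disagr N f '' C)

/-- Probability of the restriction `ρ` (with `none` = `*`) under `Pr[*] = p`. -/
noncomputable def restrictionWeight (N : ℕ) (p : ℝ) (ρ : Fin N → Option Bool) : ℝ :=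
  ∏ i : Fin N, if ρ i = none then p else (1 - p) / 2

/-- The restricted function `f_ρ`. -/
def restrictFn (N : ℕ) (f : (Fin N → Bool) → Option Bool) (ρ : Fin N → Option Bool) :
    (Fin N → Bool) → Option Bool :=
  fun y => f fun i => (ρ i).getD (y i)

/-- Composition of restrictions: first apply `ρ`, then `σ` on the variables left
unrestricted by `ρ`. -/
def restrictionComp (N : ℕ) (ρ σ : Fin N → Option Bool) : Fin N → Option Bool :=
  fun i => match ρ i with
    | some b => some b
    | none => σ i


lemma disagr_nonneg (N : ℕ) (f g : (Fin N → Bool) → Option Bool) : 0 ≤ disagr N f g := by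
  unfold disagr; positivity

lemma disagr_eq_sum (N : ℕ) (f g : (Fin N → Bool) → Option Bool) :
    disagr N f g = ∑ x : Fin N → Bool,
      (if (f x).isSome ∧ g x ≠ f x then (1:ℝ) else 0) / 2 ^ N := by
  rw [disagr, Finset.card_filter, ← Finset.sum_div]
  push_cast
  rfl

lemma disagr_triangle (N : ℕ) (f g h : (Fin N → Bool) → Option Bool) :
    disagr N f h ≤ disagr N f g + disagr N g h := by
  unfold disagr
  rw [← add_div]
  gcongr
  have hsub : (Finset.univ.filter fun x : Fin N → Bool => (f x).isSome ∧ h x ≠ f x) ⊆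
      (Finset.univ.filter fun x : Fin N → Bool => (f x).isSome ∧ g x ≠ f x) ∪
      (Finset.univ.filter fun x : Fin N → Bool => (g x).isSome ∧ h x ≠ g x) := by
    intro x hx
    simp only [Finset.mem_filter, Finset.mem_union, Finset.mem_univ, true_and] at hx ⊢
    by_cases hgf : g x = f x
    · exact Or.inr ⟨hgf ▸ hx.1, hgf ▸ hx.2⟩
    · exact Or.inl ⟨hx.1, hgf⟩
  calc ((Finset.univ.filter fun x : Fin N → Bool => (f x).isSome ∧ h x ≠ f x).card : ℝ)
      ≤ _ := by exact_mod_cast Nat.cast_le.2 (le_trans (Finset.card_le_card hsub) (Finset.card_union_le _ _))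
    _ = _ := by push_cast; ring

lemma weight_nonneg (N : ℕ) (p : ℝ) (hp0 : 0 ≤ p) (hp1 : p ≤ 1) (ρ : Fin N → Option Bool) :
    0 ≤ restrictionWeight N p ρ := by
  apply Finset.prod_nonneg
  intro i _
  split <;> linarith

lemma weight_sum (N : ℕ) (p : ℝ) :
    ∑ ρ : Fin N → Option Bool, restrictionWeight N p ρ = 1 := by
  unfold restrictionWeight
  rw [← Fintype.piFinset_univ,
    ← Finset.prod_univ_sum (fun _ : Fin N => (Finset.univ : Finset (Option Bool)))
      (fun _ v => if v = none then p else (1 - p) / 2)]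
  have : ∑ v : Option Bool, (if v = none then p else (1 - p) / 2) = 1 := by
    simp [Fintype.sum_option]
    ring
  simp [this]

lemma coord_sum (q : ℝ) (b : Bool) :
    ∑ v ∈ Finset.univ.filter (fun v : Option Bool × Bool => v.1.getD v.2 = b),
      (if v.1 = none then q else (1 - q) / 2) = 1 := by
  rw [Finset.sum_filter, Fintype.sum_prod_type]
  cases b <;> simp [Fintype.sum_option] <;> ring

lemma key_sum (N : ℕ) (q : ℝ) (h : (Fin N → Bool) → ℝ) :
    ∑ σ : Fin N → Option Bool, ∑ y : Fin N → Bool,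
      restrictionWeight N q σ * h (fun i => (σ i).getD (y i)) = ∑ x : Fin N → Bool, h x := by
  rw [← Fintype.sum_prod_type']
  rw [← Fintype.sum_equiv (Equiv.arrowProdEquivProdArrow (Fin N) (fun _ => Option Bool) (fun _ => Bool))
    (fun τ : Fin N → Option Bool × Bool =>
      restrictionWeight N q (fun i => (τ i).1) * h (fun i => (τ i).1.getD (τ i).2))
    (fun pr : (Fin N → Option Bool) × (Fin N → Bool) =>
      restrictionWeight N q pr.1 * h (fun i => (pr.1 i).getD (pr.2 i)))
    (fun τ => rfl)]
  rw [← Finset.sum_fiberwise Finset.univ (fun τ : Fin N → Option Bool × Bool =>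
      (fun i => (τ i).1.getD (τ i).2 : Fin N → Bool))
      (fun τ => restrictionWeight N q (fun i => (τ i).1) * h (fun i => (τ i).1.getD (τ i).2))]
  apply Finset.sum_congr rfl
  intro x _
  have hcongr : ∀ τ ∈ Finset.univ.filter
      (fun τ : Fin N → Option Bool × Bool => (fun i => (τ i).1.getD (τ i).2) = x),
      restrictionWeight N q (fun i => (τ i).1) * h (fun i => (τ i).1.getD (τ i).2)
        = restrictionWeight N q (fun i => (τ i).1) * h x := by
    intro τ hτ
    rw [Finset.mem_filter] at hτ
    rw [hτ.2]
  rw [Finset.sum_congr rfl hcongr, ← Finset.sum_mul]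
  have hfib : Finset.univ.filter
      (fun τ : Fin N → Option Bool × Bool => (fun i => (τ i).1.getD (τ i).2) = x)
      = Fintype.piFinset (fun i => Finset.univ.filter
          (fun v : Option Bool × Bool => v.1.getD v.2 = x i)) := by
    ext τ
    simp [Fintype.mem_piFinset, funext_iff]
  rw [hfib]
  have hone : (∑ τ ∈ Fintype.piFinset fun i => Finset.univ.filter
      (fun v : Option Bool × Bool => v.1.getD v.2 = x i),
      restrictionWeight N q fun i => (τ i).1) = 1 := by
    unfold restrictionWeight
    rw [← Finset.prod_univ_sum (fun i => Finset.univ.filter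
        (fun v : Option Bool × Bool => v.1.getD v.2 = x i))
      (fun _ v => if v.1 = none then q else (1 - q) / 2)]
    simp [coord_sum]
  rw [hone, one_mul]

lemma restrict_comp_eq (N : ℕ) (f : (Fin N → Bool) → Option Bool) (ρ σ : Fin N → Option Bool) :
    restrictFn N f (restrictionComp N ρ σ) = restrictFn N (restrictFn N f ρ) σ := by
  funext y
  unfold restrictFn restrictionComp
  congr 1
  funext i
  cases h : ρ i <;> simp [h]

lemma exp_disagr (N : ℕ) (q : ℝ) (F G : (Fin N → Bool) → Option Bool) :
    ∑ σ : Fin N → Option Bool,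
      restrictionWeight N q σ * disagr N (restrictFn N F σ) (restrictFn N G σ)
      = disagr N F G := by
  have hterm : ∀ σ : Fin N → Option Bool,
      restrictionWeight N q σ * disagr N (restrictFn N F σ) (restrictFn N G σ)
      = ∑ y : Fin N → Bool, restrictionWeight N q σ *
          ((fun x => (if (F x).isSome ∧ G x ≠ F x then (1:ℝ) else 0) / 2 ^ N)
            (fun i => (σ i).getD (y i))) := by
    intro σ
    rw [disagr_eq_sum, Finset.mul_sum]
    rfl
  rw [Finset.sum_congr rfl (fun σ _ => hterm σ), key_sum N q
    (fun x => (if (F x).isSome ∧ G x ≠ F x then (1:ℝ) else 0) / 2 ^ N), ← disagr_eq_sum]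

lemma bddBelow_image (N : ℕ) (f : (Fin N → Bool) → Option Bool)
    (C : Set ((Fin N → Bool) → Option Bool)) : BddBelow (disagr N f '' C) := by
  refine ⟨0, ?_⟩
  rintro r ⟨g, -, rfl⟩
  exact disagr_nonneg N f g

lemma disagrClass_le (N : ℕ) (f : (Fin N → Bool) → Option Bool)
    (C : Set ((Fin N → Bool) → Option Bool)) (g : (Fin N → Bool) → Option Bool) (hg : g ∈ C) :
    disagrClass N f C ≤ disagr N f g :=
  csInf_le (bddBelow_image N f C) ⟨g, hg, rfl⟩

lemma disagrClass_triangle (N : ℕ) (F G : (Fin N → Bool) → Option Bool)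
    (D : Set ((Fin N → Bool) → Option Bool)) (hD : D.Nonempty) :
    disagrClass N F D ≤ disagr N F G + disagrClass N G D := by
  have h : disagrClass N F D - disagr N F G ≤ disagrClass N G D := by
    apply le_csInf (hD.image _)
    rintro r ⟨h, hh, rfl⟩
    have h1 := disagrClass_le N F D h hh
    have h2 := disagr_triangle N F G h
    linarith
  linarith

/-- Disagreement accumulates additively under composed random restrictions:
if `E_ρ[disagr_{f_ρ}(C)] ≤ ε` and `E_σ[disagr_{g_σ}(D)] ≤ δ` for every `g ∈ C`,
then `E_{ρσ}[disagr_{f_{ρσ}}(D)] ≤ ε + δ`. -/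
theorem disagr_composing_restrictions (N : ℕ) (p q ε δ : ℝ)
    (hp0 : 0 ≤ p) (hp1 : p ≤ 1) (hq0 : 0 ≤ q) (hq1 : q ≤ 1)
    (f : (Fin N → Bool) → Option Bool)
    (C D : Set ((Fin N → Bool) → Option Bool)) (hC : C.Nonempty) (hD : D.Nonempty)
    (ha : ∑ ρ : Fin N → Option Bool,
        restrictionWeight N p ρ * disagrClass N (restrictFn N f ρ) C ≤ ε)
    (hb : ∀ g ∈ C, ∑ σ : Fin N → Option Bool,
        restrictionWeight N q σ * disagrClass N (restrictFn N g σ) D ≤ δ) :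
    ∑ ρ : Fin N → Option Bool, ∑ σ : Fin N → Option Bool,
        restrictionWeight N p ρ * restrictionWeight N q σ *
          disagrClass N (restrictFn N f (restrictionComp N ρ σ)) D
      ≤ ε + δ := by
  apply le_of_forall_pos_le_add
  intro η hη
  -- choose near-optimal g for each ρ
  have hchoice : ∀ ρ : Fin N → Option Bool, ∃ g ∈ C,
      disagr N (restrictFn N f ρ) g < disagrClass N (restrictFn N f ρ) C + η := by
    intro ρ
    obtain ⟨a, ⟨g, hgC, rfl⟩, hlt⟩ := Real.lt_sInf_add_pos (hC.image _) hη
    exact ⟨g, hgC, hlt⟩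
  choose g hgC hg using hchoice
  have inner : ∀ ρ : Fin N → Option Bool,
      ∑ σ : Fin N → Option Bool, restrictionWeight N q σ *
        disagrClass N (restrictFn N f (restrictionComp N ρ σ)) D
      ≤ disagrClass N (restrictFn N f ρ) C + η + δ := by
    intro ρ
    have step1 : ∑ σ : Fin N → Option Bool, restrictionWeight N q σ *
        disagrClass N (restrictFn N f (restrictionComp N ρ σ)) D
        ≤ ∑ σ : Fin N → Option Bool, restrictionWeight N q σ *
          (disagr N (restrictFn N (restrictFn N f ρ) σ) (restrictFn N (g ρ) σ)
            + disagrClass N (restrictFn N (g ρ) σ) D) := by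
      apply Finset.sum_le_sum
      intro σ _
      apply mul_le_mul_of_nonneg_left _ (weight_nonneg N q hq0 hq1 σ)
      rw [restrict_comp_eq]
      exact disagrClass_triangle N _ _ D hD
    have step2 : ∑ σ : Fin N → Option Bool, restrictionWeight N q σ *
        (disagr N (restrictFn N (restrictFn N f ρ) σ) (restrictFn N (g ρ) σ)
          + disagrClass N (restrictFn N (g ρ) σ) D)
        = disagr N (restrictFn N f ρ) (g ρ)
          + ∑ σ : Fin N → Option Bool, restrictionWeight N q σ *
              disagrClass N (restrictFn N (g ρ) σ) D := by
      simp_rw [mul_add, Finset.sum_add_distrib]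
      rw [exp_disagr]
    have step3 := hb (g ρ) (hgC ρ)
    have step4 := le_of_lt (hg ρ)
    calc _ ≤ _ := step1
      _ = _ := step2
      _ ≤ disagrClass N (restrictFn N f ρ) C + η + δ := by linarith
  calc ∑ ρ : Fin N → Option Bool, ∑ σ : Fin N → Option Bool,
        restrictionWeight N p ρ * restrictionWeight N q σ *
          disagrClass N (restrictFn N f (restrictionComp N ρ σ)) D
      = ∑ ρ : Fin N → Option Bool, restrictionWeight N p ρ *
          ∑ σ : Fin N → Option Bool, restrictionWeight N q σ *
            disagrClass N (restrictFn N f (restrictionComp N ρ σ)) D := by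
        simp_rw [Finset.mul_sum, mul_assoc]
    _ ≤ ∑ ρ : Fin N → Option Bool, restrictionWeight N p ρ *
          (disagrClass N (restrictFn N f ρ) C + η + δ) := by
        apply Finset.sum_le_sum
        intro ρ _
        exact mul_le_mul_of_nonneg_left (inner ρ) (weight_nonneg N p hp0 hp1 ρ)
    _ = (∑ ρ : Fin N → Option Bool, restrictionWeight N p ρ *
          disagrClass N (restrictFn N f ρ) C) + (η + δ) := by
        simp_rw [mul_add, Finset.sum_add_distrib, ← Finset.sum_mul, weight_sum N p]
        ring
    _ ≤ ε + δ + η := by linarith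
end

section
/- Let f : {0,1}^N → {0,1} be a Boolean function and B = {B_1,…,B_k} a collection of pairwise disjoint subsets of [N]. Define g : {0,1}^{N+k} → {0,1} by g(y, z) = f(y ⊕ z_1·B_1 ⊕ ⋯ ⊕ z_k·B_k), where z_i·B_i is the indicator string of B_i if z_i = 1 and the all-zeros string otherwise. Then for every x ∈ {0,1}^N and every (y,z) with x = y ⊕ z_1·B_1 ⊕ ⋯ ⊕ z_k·B_k, the B-block sensitivity satisfies bs_B^x(f) ≤ s^{(y,z)}(g). Consequently, for every t, Pr_{x∼{0,1}^N}[bs_B^x(f) ≥ t] ≤ Pr_{(y,z)∼{0,1}^{N+k}}[s^{(y,z)}(g) ≥ t]. -/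
open Finset

/-- Flip all bits of `x` indexed by the set `S`. -/
def flipSet (N : ℕ) (S : Finset (Fin N)) (x : Fin N → Bool) : Fin N → Bool :=
  fun j => xor (x j) (decide (j ∈ S))

/-- Block sensitivity of `f` at `x` with respect to the blocks `B : Fin k → Finset (Fin N)`:
the number of blocks whose flip changes the value of `f`. -/
def blockSens (N k : ℕ) (B : Fin k → Finset (Fin N)) (f : (Fin N → Bool) → Bool)
    (x : Fin N → Bool) : ℕ :=
  (Finset.univ.filter fun i : Fin k => f (flipSet N (B i) x) ≠ f x).card

/-- `combine B y z = y ⊕ z_1·B_1 ⊕ ⋯ ⊕ z_k·B_k`. -/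
def combineInput (N k : ℕ) (B : Fin k → Finset (Fin N)) (y : Fin N → Bool)
    (z : Fin k → Bool) : Fin N → Bool :=
  fun j => xor (y j) (decide (∃ i, z i = true ∧ j ∈ B i))

/-- `g(y,z) = f(y ⊕ z_1·B_1 ⊕ ⋯ ⊕ z_k·B_k)`. -/
def gFun (N k : ℕ) (B : Fin k → Finset (Fin N)) (f : (Fin N → Bool) → Bool)
    (y : Fin N → Bool) (z : Fin k → Bool) : Bool :=
  f (combineInput N k B y z)

/-- Sensitivity of `g` at the pair `(y,z)`: the number of single-bit flips (of `y` or
of `z`) that change the value of `g`. -/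
def sensPair (N k : ℕ) (g : (Fin N → Bool) → (Fin k → Bool) → Bool)
    (y : Fin N → Bool) (z : Fin k → Bool) : ℕ :=
  (Finset.univ.filter fun j : Fin N => g (Function.update y j (!y j)) z ≠ g y z).card +
  (Finset.univ.filter fun i : Fin k => g y (Function.update z i (!z i)) ≠ g y z).card


lemma combine_update (N k : ℕ) (B : Fin k → Finset (Fin N))
    (hdisj : ∀ i j : Fin k, i ≠ j → Disjoint (B i) (B j))
    (y : Fin N → Bool) (z : Fin k → Bool) (i : Fin k) :
    combineInput N k B y (Function.update z i (!z i))
      = flipSet N (B i) (combineInput N k B y z) := by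
  funext j
  simp only [combineInput, flipSet]
  by_cases hj : j ∈ B i
  · have h1 : (∃ i', z i' = true ∧ j ∈ B i') ↔ z i = true := by
      constructor
      · rintro ⟨i', hz, hj'⟩
        rcases eq_or_ne i' i with rfl | h
        · exact hz
        · exact absurd hj ((Finset.disjoint_left.1 (hdisj i' i h)) hj')
      · intro h; exact ⟨i, h, hj⟩
    have h2 : (∃ i', Function.update z i (!z i) i' = true ∧ j ∈ B i') ↔ (!z i) = true := by
      constructor
      · rintro ⟨i', hz, hj'⟩
        rcases eq_or_ne i' i with rfl | h
        · simpa using hz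
        · exact absurd hj ((Finset.disjoint_left.1 (hdisj i' i h)) hj')
      · intro h; exact ⟨i, by simpa using h, hj⟩
    simp only [h1, h2, hj, decide_true]
    cases z i <;> cases y j <;> rfl
  · have h2 : (∃ i', Function.update z i (!z i) i' = true ∧ j ∈ B i')
        ↔ (∃ i', z i' = true ∧ j ∈ B i') := by
      constructor <;> rintro ⟨i', hz, hj'⟩ <;> refine ⟨i', ?_, hj'⟩ <;>
        rcases eq_or_ne i' i with rfl | h
      · exact absurd hj' hj
      · simpa [Function.update_of_ne h] using hz
      · exact absurd hj' hj
      · simpa [Function.update_of_ne h] using hz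
    simp [h2, hj]

lemma combine_involutive (N k : ℕ) (B : Fin k → Finset (Fin N))
    (y : Fin N → Bool) (z : Fin k → Bool) :
    combineInput N k B (combineInput N k B y z) z = y := by
  funext j
  simp [combineInput, Bool.xor_assoc]

lemma blockSens_le (N k : ℕ) (B : Fin k → Finset (Fin N))
    (hdisj : ∀ i j : Fin k, i ≠ j → Disjoint (B i) (B j))
    (f : (Fin N → Bool) → Bool) (x y : Fin N → Bool) (z : Fin k → Bool)
    (hx : combineInput N k B y z = x) :
    blockSens N k B f x ≤ sensPair N k (gFun N k B f) y z := by
  have key : (Finset.univ.filter fun i : Fin k => f (flipSet N (B i) x) ≠ f x)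
      = (Finset.univ.filter fun i : Fin k =>
          gFun N k B f y (Function.update z i (!z i)) ≠ gFun N k B f y z) := by
    apply Finset.filter_congr
    intro i _
    simp only [gFun, combine_update N k B hdisj, hx]
  unfold blockSens sensPair
  rw [key]
  exact Nat.le_add_left _ _

/-- Block sensitivity of `f` is dominated by the sensitivity of the auxiliary
function `g(y,z) = f(y ⊕ ⊕_i z_i·B_i)`, pointwise on fibres and hence in
distribution over uniform inputs. -/
theorem blockSens_le_sens_aux (N k : ℕ) (B : Fin k → Finset (Fin N))
    (hdisj : ∀ i j : Fin k, i ≠ j → Disjoint (B i) (B j))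
    (f : (Fin N → Bool) → Bool) :
    (∀ (x : Fin N → Bool) (y : Fin N → Bool) (z : Fin k → Bool),
        combineInput N k B y z = x →
        blockSens N k B f x ≤ sensPair N k (gFun N k B f) y z) ∧
    (∀ t : ℕ,
      ((Finset.univ.filter fun x : Fin N → Bool => t ≤ blockSens N k B f x).card : ℝ)
          / 2 ^ N
        ≤ ((Finset.univ.filter fun p : (Fin N → Bool) × (Fin k → Bool) =>
              t ≤ sensPair N k (gFun N k B f) p.1 p.2).card : ℝ) / 2 ^ (N + k)) := by
  constructor
  · intro x y z hx
    exact blockSens_le N k B hdisj f x y z hx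
  · intro t
    set A := Finset.univ.filter fun x : Fin N → Bool => t ≤ blockSens N k B f x with hA
    set S := Finset.univ.filter fun p : (Fin N → Bool) × (Fin k → Bool) =>
        t ≤ sensPair N k (gFun N k B f) p.1 p.2 with hS
    have hcard : A.card * 2 ^ k ≤ S.card := by
      have : (A ×ˢ (Finset.univ : Finset (Fin k → Bool))).card ≤ S.card := by
        apply Finset.card_le_card_of_injOn
          (fun p => (combineInput N k B p.1 p.2, p.2))
        · rintro ⟨x, z⟩ hp
          simp only [Finset.mem_coe, Finset.mem_product, hA, Finset.mem_filter] at hp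
          simp only [Finset.mem_coe, hS, Finset.mem_filter, Finset.mem_univ, true_and]
          exact le_trans hp.1.2
            (blockSens_le N k B hdisj f x _ z (combine_involutive N k B x z))
        · rintro ⟨x1, z1⟩ _ ⟨x2, z2⟩ _ h
          simp only [Prod.mk.injEq] at h
          obtain ⟨h1, h2⟩ := h
          subst h2
          have := congrArg (fun w => combineInput N k B w z1) h1
          simpa [combine_involutive] using this
      simpa [Finset.card_product] using this
    have h2N : (0:ℝ) < 2 ^ N := by positivity
    have h2Nk : (0:ℝ) < 2 ^ (N + k) := by positivity
    rw [div_le_div_iff₀ h2N h2Nk]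
    have hcardR : (A.card : ℝ) * 2 ^ k ≤ S.card := by exact_mod_cast hcard
    calc (A.card : ℝ) * 2 ^ (N + k) = (A.card : ℝ) * 2 ^ k * 2 ^ N := by rw [pow_add]; ring
      _ ≤ (S.card : ℝ) * 2 ^ N := by
          exact mul_le_mul_of_nonneg_right hcardR (le_of_lt h2N)
end
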